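/- Let m, n ≥ 2 and let H be any directed Hamiltonian cycle of the Cartesian product of the directed cycles on m and n vertices. Then there exist positive integers s₁ and s₂ with s₁ + s₂ = gcd(m, n), gcd(m, s₁) = 1, and gcd(n, s₂) = 1, such that every gcd(m, n) consecutive arcs of H contain exactly s₁ arcs in the first dimension and exactly s₂ arcs in the second dimension. -/

import Mathlib

/-!
The Cartesian product of the directed cycles on `m` and `n` vertices is the
digraph on `ZMod m × ZMod n` with arcs `(x, y) → (x+1, y)` (said to be in the
first dimension) and `(x, y) → (x, y+1)` (said to be in the second dimension).
A directed Hamiltonian cycle is a cyclic enumeration `H : ZMod (m*n) → ZMod m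
× ZMod n` of all `m*n` vertices following the arc directions; windows of
consecutive arcs are read cyclically.
-/

/-- There is an arc from `u` to `v` in the Cartesian product of the directed
cycles on `m` and `n` vertices. -/
def DirProdStep {m n : ℕ} (u v : ZMod m × ZMod n) : Prop :=
  (v.1 = u.1 + 1 ∧ v.2 = u.2) ∨ (v.1 = u.1 ∧ v.2 = u.2 + 1)

/-- A directed Hamiltonian cycle of the Cartesian product of the directed
cycles on `m` and `n` vertices. -/
def IsDirHamCycle2 {m n : ℕ} (H : ZMod (m * n) → ZMod m × ZMod n) : Prop :=
  Function.Bijective H ∧ ∀ t, DirProdStep (H t) (H (t + 1))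

/-- The arc of `H` at position `s` is in the first dimension. -/
def ArcInDim1 {m n : ℕ} (H : ZMod (m * n) → ZMod m × ZMod n)
    (s : ZMod (m * n)) : Prop :=
  (H (s + 1)).1 = (H s).1 + 1 ∧ (H (s + 1)).2 = (H s).2

/-- The arc of `H` at position `s` is in the second dimension. -/
def ArcInDim2 {m n : ℕ} (H : ZMod (m * n) → ZMod m × ZMod n)
    (s : ZMod (m * n)) : Prop :=
  (H (s + 1)).1 = (H s).1 ∧ (H (s + 1)).2 = (H s).2 + 1


instance {m n : ℕ} (H : ZMod (m * n) → ZMod m × ZMod n) (s : ZMod (m * n)) :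
    Decidable (ArcInDim1 H s) :=
  inferInstanceAs (Decidable (_ ∧ _))

instance {m n : ℕ} (H : ZMod (m * n) → ZMod m × ZMod n) (s : ZMod (m * n)) :
    Decidable (ArcInDim2 H s) :=
  inferInstanceAs (Decidable (_ ∧ _))

/-- Every window of `w` consecutive arcs of `H` contains exactly `s₁` arcs in
the first dimension and exactly `s₂` arcs in the second dimension. -/
def WindowCounts {m n : ℕ} (H : ZMod (m * n) → ZMod m × ZMod n)
    (w s₁ s₂ : ℕ) : Prop :=
  ∀ t : ZMod (m * n),
    ((Finset.range w).filter (fun a => ArcInDim1 H (t + (a : ℕ)))).card = s₁ ∧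
    ((Finset.range w).filter (fun a => ArcInDim2 H (t + (a : ℕ)))).card = s₂


set_option linter.unusedSectionVars false

section Main
variable {m n : ℕ} (H : ZMod (m * n) → ZMod m × ZMod n)

/-- `φ v = v.1 + v.2` read in `ZMod (gcd m n)`. -/
def phi {m n : ℕ} (v : ZMod m × ZMod n) : ZMod (Nat.gcd m n) :=
  ZMod.castHom (Nat.gcd_dvd_left m n) (ZMod (Nat.gcd m n)) v.1 +
  ZMod.castHom (Nat.gcd_dvd_right m n) (ZMod (Nat.gcd m n)) v.2

/-- reduction `ZMod (m*n) → ZMod (gcd m n)`. -/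
def psi (m n : ℕ) : ZMod (m * n) →+* ZMod (Nat.gcd m n) :=
  ZMod.castHom ((Nat.gcd_dvd_left m n).trans (dvd_mul_right m n)) (ZMod (Nat.gcd m n))

variable (hm : 2 ≤ m) (hn : 2 ≤ n) (hH : IsDirHamCycle2 H)
include hm hn hH

lemma dim2_iff_not (t : ZMod (m * n)) : ArcInDim2 H t ↔ ¬ ArcInDim1 H t := by
  haveI : Fact (1 < n) := ⟨hn⟩
  constructor
  · intro h2 h1
    exact one_ne_zero (left_eq_add.mp (h1.2.symm.trans h2.2))
  · intro h1
    rcases hH.2 t with h | h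
    · exact absurd h h1
    · exact h

lemma prop_one (t t' : ZMod (m * n)) (ht' : H t' = ((H t).1 + 1, (H t).2 - 1))
    (h1 : ArcInDim1 H t) : ArcInDim1 H t' := by
  haveI : Fact (1 < m) := ⟨hm⟩
  rcases hH.2 t' with h | h
  · exact h
  · exfalso
    have key : H (t' + 1) = H (t + 1) := by
      apply Prod.ext
      · rw [h.1, ht', h1.1]
      · rw [h.2, ht', h1.2]; simp
    have : t' = t := by
      have := hH.1.1 key
      exact add_right_cancel this
    rw [this] at ht'
    exact one_ne_zero (left_eq_add.mp (congrArg Prod.fst ht'))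

lemma prop_k (k : ℕ) : ∀ (t t' : ZMod (m * n)),
    H t' = ((H t).1 + (k : ZMod m), (H t).2 - (k : ZMod n)) →
    ArcInDim1 H t → ArcInDim1 H t' := by
  induction k with
  | zero =>
    intro t t' ht' h1
    have : H t' = H t := by rw [ht']; simp
    rwa [hH.1.1 this]
  | succ k ih =>
    intro t t' ht' h1
    obtain ⟨t'', ht''⟩ := hH.1.2 ((H t).1 + (k : ZMod m), (H t).2 - (k : ZMod n))
    have h1'' := ih t t'' ht'' h1
    apply prop_one H hm hn hH t'' t' _ h1''
    rw [ht', ht'']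
    push_cast
    apply Prod.ext <;> simp <;> ring

lemma crt (v w : ZMod m × ZMod n) (h : phi v = phi w) :
    ∃ k : ℕ, w = (v.1 + (k : ZMod m), v.2 - (k : ZMod n)) := by
  haveI : NeZero m := ⟨by omega⟩
  haveI : NeZero n := ⟨by omega⟩
  have h' : ((w.1 - v.1).val : ZMod (Nat.gcd m n)) = ((v.2 - w.2).val : ZMod (Nat.gcd m n)) := by
    have e1 : ((w.1 - v.1).val : ZMod (Nat.gcd m n)) =
        ZMod.castHom (Nat.gcd_dvd_left m n) (ZMod (Nat.gcd m n)) (w.1 - v.1) := by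
      rw [ZMod.castHom_apply, ZMod.natCast_val]
    have e2 : ((v.2 - w.2).val : ZMod (Nat.gcd m n)) =
        ZMod.castHom (Nat.gcd_dvd_right m n) (ZMod (Nat.gcd m n)) (v.2 - w.2) := by
      rw [ZMod.castHom_apply, ZMod.natCast_val]
    rw [e1, e2, map_sub, map_sub]
    unfold phi at h
    linear_combination -h
  have hmod : (w.1 - v.1).val ≡ (v.2 - w.2).val [MOD Nat.gcd m n] :=
    (ZMod.natCast_eq_natCast_iff _ _ _).1 h'
  obtain ⟨k, hk1, hk2⟩ := Nat.chineseRemainder' hmod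
  refine ⟨k, ?_⟩
  have e1 : (k : ZMod m) = w.1 - v.1 := by
    have := (ZMod.natCast_eq_natCast_iff _ _ _).2 hk1
    rw [this, ZMod.natCast_val, ZMod.cast_id]
  have e2 : (k : ZMod n) = v.2 - w.2 := by
    have := (ZMod.natCast_eq_natCast_iff _ _ _).2 hk2
    rw [this, ZMod.natCast_val, ZMod.cast_id]
  apply Prod.ext
  · simp [e1]
  · simp [e2]

lemma fiber_imp (t t' : ZMod (m * n)) (h : phi (H t) = phi (H t'))
    (h1 : ArcInDim1 H t) : ArcInDim1 H t' := by
  obtain ⟨k, hk⟩ := crt H hm hn hH (H t) (H t') h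
  exact prop_k H hm hn hH k t t' hk h1

lemma phase (t : ZMod (m * n)) : phi (H (t + 1)) = phi (H t) + 1 := by
  rcases hH.2 t with h | h <;>
  · unfold phi
    rw [h.1, h.2]
    simp only [map_add, map_one]
    ring

lemma phase_k (t : ZMod (m * n)) (a : ℕ) :
    phi (H (t + (a : ZMod (m * n)))) = phi (H t) + (a : ZMod (Nat.gcd m n)) := by
  induction a with
  | zero => simp
  | succ a ih =>
    push_cast
    rw [← add_assoc, phase H hm hn hH (t + (a : ZMod (m * n))), ih]
    push_cast
    ring

lemma phi_eq (t : ZMod (m * n)) : phi (H t) = phi (H 0) + psi m n t := by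
  haveI : NeZero (m * n) := ⟨by positivity⟩
  have ht : ((t.val : ℕ) : ZMod (m * n)) = t := ZMod.natCast_zmod_val t
  conv_lhs => rw [← ht]
  have h0 : phi (H (((t.val : ℕ) : ZMod (m * n)))) = phi (H 0) + ((t.val : ℕ) : ZMod (Nat.gcd m n)) := by
    have := phase_k H hm hn hH 0 t.val
    rwa [zero_add] at this
  rw [h0]
  congr 1
  rw [← ht]
  simp [psi]


lemma det (t t' : ZMod (m * n)) (h : psi m n t = psi m n t') :
    ArcInDim1 H t ↔ ArcInDim1 H t' := by
  have hphi : phi (H t) = phi (H t') := by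
    rw [phi_eq H hm hn hH t, phi_eq H hm hn hH t', h]
  exact ⟨fiber_imp H hm hn hH t t' hphi, fiber_imp H hm hn hH t' t hphi.symm⟩

lemma window_const [DecidablePred (ArcInDim1 H)] (t : ZMod (m * n)) :
    ((Finset.range (Nat.gcd m n)).filter
        (fun a => ArcInDim1 H (t + (a : ℕ)))).card =
    ((Finset.range (Nat.gcd m n)).filter
        (fun a => ArcInDim1 H ((a : ℕ) : ZMod (m * n)))).card := by
  have hd : 0 < Nat.gcd m n := Nat.gcd_pos_of_pos_left n (by omega)
  haveI : NeZero (Nat.gcd m n) := ⟨hd.ne'⟩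
  have hpsiadd : ∀ (u : ZMod (m * n)) (a : ℕ), psi m n (u + (a : ℕ)) = psi m n u + (a : ℕ) := by
    intro u a
    simp [psi, map_add, map_natCast]
  have hpsicast : ∀ a : ℕ, psi m n ((a : ℕ) : ZMod (m * n)) = (a : ZMod (Nat.gcd m n)) := by
    intro a; simp [psi, map_natCast]
  apply Finset.card_bij' (fun a _ => ((psi m n t + (a : ℕ)).val))
    (fun a _ => (((a : ℕ) - psi m n t : ZMod (Nat.gcd m n)).val))
  · intro a ha
    simp only [Finset.mem_filter, Finset.mem_range] at ha ⊢
    refine ⟨ZMod.val_lt _, ?_⟩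
    rw [det H hm hn hH _ (t + (a : ℕ)) ?_]
    · exact ha.2
    · rw [hpsiadd, hpsicast, ZMod.natCast_zmod_val]
  · intro a ha
    simp only [Finset.mem_filter, Finset.mem_range] at ha ⊢
    refine ⟨ZMod.val_lt _, ?_⟩
    rw [det H hm hn hH _ ((a : ℕ) : ZMod (m * n)) ?_]
    · exact ha.2
    · rw [hpsiadd, hpsicast, ZMod.natCast_zmod_val]
      ring
  · intro a ha
    simp only [Finset.mem_filter, Finset.mem_range] at ha
    rw [ZMod.natCast_zmod_val]
    simp [ZMod.val_cast_of_lt ha.1]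
  · intro a ha
    simp only [Finset.mem_filter, Finset.mem_range] at ha
    rw [ZMod.natCast_zmod_val]
    simp [ZMod.val_cast_of_lt ha.1]


lemma exists_dim1 : ∃ t, ArcInDim1 H t := by
  haveI : Fact (1 < m) := ⟨hm⟩
  haveI : NeZero (m * n) := ⟨by positivity⟩
  by_contra hc
  push_neg at hc
  have hall : ∀ t, ArcInDim2 H t := fun t => (dim2_iff_not H hm hn hH t).2 (hc t)
  have hconst : ∀ T : ℕ, (H ((T : ℕ) : ZMod (m * n))).1 = (H 0).1 := by
    intro T
    induction T with
    | zero => simp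
    | succ T ih =>
      have := (hall ((T : ℕ) : ZMod (m * n))).1
      push_cast
      rw [this, ih]
  obtain ⟨t, ht⟩ := hH.1.2 ((H 0).1 + 1, (H 0).2)
  have h1 : (H t).1 = (H 0).1 + 1 := by rw [ht]
  rw [← ZMod.natCast_zmod_val t, hconst t.val] at h1
  exact one_ne_zero (left_eq_add.mp h1)

lemma exists_dim2 : ∃ t, ArcInDim2 H t := by
  haveI : Fact (1 < n) := ⟨hn⟩
  haveI : NeZero (m * n) := ⟨by positivity⟩
  by_contra hc
  push_neg at hc
  have hall : ∀ t, ArcInDim1 H t := by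
    intro t
    rcases hH.2 t with h | h
    · exact h
    · exact absurd h (hc t)
  have hconst : ∀ T : ℕ, (H ((T : ℕ) : ZMod (m * n))).2 = (H 0).2 := by
    intro T
    induction T with
    | zero => simp
    | succ T ih =>
      have := (hall ((T : ℕ) : ZMod (m * n))).2
      push_cast
      rw [this, ih]
  obtain ⟨t, ht⟩ := hH.1.2 ((H 0).1, (H 0).2 + 1)
  have h1 : (H t).2 = (H 0).2 + 1 := by rw [ht]
  rw [← ZMod.natCast_zmod_val t, hconst t.val] at h1
  exact one_ne_zero (left_eq_add.mp h1)

lemma window2_card [DecidablePred (ArcInDim1 H)] [DecidablePred (ArcInDim2 H)]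
    (t : ZMod (m * n)) :
    ((Finset.range (Nat.gcd m n)).filter (fun a => ArcInDim2 H (t + (a : ℕ)))).card =
    Nat.gcd m n -
      ((Finset.range (Nat.gcd m n)).filter (fun a => ArcInDim1 H (t + (a : ℕ)))).card := by
  have he : (Finset.range (Nat.gcd m n)).filter (fun a => ArcInDim2 H (t + (a : ℕ))) =
      (Finset.range (Nat.gcd m n)).filter (fun a => ¬ ArcInDim1 H (t + (a : ℕ))) := by
    apply Finset.filter_congr
    intro a _
    exact dim2_iff_not H hm hn hH _
  rw [he, Finset.filter_not, Finset.card_sdiff_of_subset (Finset.filter_subset _ _), Finset.card_range]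

lemma traj [DecidablePred (ArcInDim1 H)] (T : ℕ) :
    (H ((T : ℕ) : ZMod (m * n))).1 = (H 0).1 +
      ((((Finset.range T).filter (fun a => ArcInDim1 H ((a : ℕ) : ZMod (m * n)))).card : ℕ) : ZMod m) ∧
    (H ((T : ℕ) : ZMod (m * n))).2 = (H 0).2 +
      (((T - ((Finset.range T).filter (fun a => ArcInDim1 H ((a : ℕ) : ZMod (m * n)))).card : ℕ)) : ZMod n) := by
  induction T with
  | zero => simp
  | succ T ih =>
    have hle : ((Finset.range T).filter (fun a => ArcInDim1 H ((a : ℕ) : ZMod (m * n)))).card ≤ T :=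
      le_trans (Finset.card_filter_le _ _) (le_of_eq (Finset.card_range T))
    set c := ((Finset.range T).filter (fun a => ArcInDim1 H ((a : ℕ) : ZMod (m * n)))).card with hc
    have hTc : ((T + 1 : ℕ) : ZMod (m * n)) = ((T : ℕ) : ZMod (m * n)) + 1 := by push_cast; ring
    rcases hH.2 ((T : ℕ) : ZMod (m * n)) with h | h
    · have h' : ArcInDim1 H ((T : ℕ) : ZMod (m * n)) := h
      have hcard : ((Finset.range (T + 1)).filter
          (fun a => ArcInDim1 H ((a : ℕ) : ZMod (m * n)))).card = c + 1 := by
        rw [Finset.range_add_one, Finset.filter_insert, if_pos h',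
          Finset.card_insert_of_notMem (by simp)]
      have hsub : T + 1 - (c + 1) = T - c := by omega
      rw [hcard, hsub]
      constructor
      · rw [hTc, h.1, ih.1]; push_cast; ring
      · rw [hTc, h.2, ih.2]
    · have hnot : ¬ ArcInDim1 H ((T : ℕ) : ZMod (m * n)) :=
        (dim2_iff_not H hm hn hH _).1 h
      have hcard : ((Finset.range (T + 1)).filter
          (fun a => ArcInDim1 H ((a : ℕ) : ZMod (m * n)))).card = c := by
        rw [Finset.range_add_one, Finset.filter_insert, if_neg hnot]
      have hsub : T + 1 - c = (T - c) + 1 := by omega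
      rw [hcard, hsub]
      constructor
      · rw [hTc, h.1, ih.1]
      · rw [hTc, h.2, ih.2]; push_cast; ring


omit hm hn hH in
lemma filter_range_add (P : ℕ → Prop) [DecidablePred P] (A B : ℕ) :
    ((Finset.range (A + B)).filter P).card =
    ((Finset.range A).filter P).card + ((Finset.range B).filter (fun a => P (A + a))).card := by
  rw [Finset.range_add, Finset.filter_union, Finset.card_union_of_disjoint, Finset.filter_map,
    Finset.card_map]
  · congr 1
  · refine Finset.disjoint_left.2 ?_
    intro x hx hx'
    simp only [Finset.mem_filter, Finset.mem_range, Finset.mem_map, addLeftEmbedding_apply] at hx hx'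
    obtain ⟨⟨a, ha, rfl⟩, -⟩ := hx'
    omega

lemma c1_mul [DecidablePred (ArcInDim1 H)] (k : ℕ) :
    ((Finset.range (k * Nat.gcd m n)).filter
      (fun a => ArcInDim1 H ((a : ℕ) : ZMod (m * n)))).card =
    k * ((Finset.range (Nat.gcd m n)).filter
      (fun a => ArcInDim1 H ((a : ℕ) : ZMod (m * n)))).card := by
  induction k with
  | zero => simp
  | succ k ih =>
    have hsplit := filter_range_add (fun a => ArcInDim1 H ((a : ℕ) : ZMod (m * n)))
      (k * Nat.gcd m n) (Nat.gcd m n)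
    have hwin : ((Finset.range (Nat.gcd m n)).filter
        (fun a => ArcInDim1 H (((k * Nat.gcd m n + a : ℕ)) : ZMod (m * n)))).card =
        ((Finset.range (Nat.gcd m n)).filter
        (fun a => ArcInDim1 H ((a : ℕ) : ZMod (m * n)))).card := by
      have he : ∀ a : ℕ, (((k * Nat.gcd m n + a : ℕ)) : ZMod (m * n)) =
          (((k * Nat.gcd m n : ℕ)) : ZMod (m * n)) + (a : ℕ) := by intro a; push_cast; ring
      calc ((Finset.range (Nat.gcd m n)).filter
            (fun a => ArcInDim1 H (((k * Nat.gcd m n + a : ℕ)) : ZMod (m * n)))).card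
          = ((Finset.range (Nat.gcd m n)).filter
            (fun a => ArcInDim1 H ((((k * Nat.gcd m n : ℕ)) : ZMod (m * n)) + (a : ℕ)))).card := by
            congr 1
            apply Finset.filter_congr
            intro a _
            rw [he a]
        _ = _ := window_const H hm hn hH _
    have : (k + 1) * Nat.gcd m n = k * Nat.gcd m n + Nat.gcd m n := by ring
    rw [this, hsplit, hwin, ih]
    ring

end Main

lemma aux_cop (m n s₁ s₂ : ℕ) (hm : 0 < m) (hn : 0 < n)
    (hs : s₁ + s₂ = Nat.gcd m n)
    (hk : Nat.lcm (m / Nat.gcd m s₁) (n / Nat.gcd n s₂) = Nat.lcm m n) :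
    Nat.gcd m s₁ = 1 := by
  by_contra hg
  obtain ⟨p, hp, hpd⟩ := Nat.exists_prime_and_dvd hg
  set g₁ := Nat.gcd m s₁ with hg₁
  set g₂ := Nat.gcd n s₂ with hg₂
  have hg₁m : g₁ ∣ m := Nat.gcd_dvd_left _ _
  have hg₂n : g₂ ∣ n := Nat.gcd_dvd_left _ _
  have hg₁0 : g₁ ≠ 0 := (Nat.pos_of_dvd_of_pos hg₁m hm).ne'
  have hg₂0 : g₂ ≠ 0 := (Nat.pos_of_dvd_of_pos hg₂n hn).ne'
  have hm0 : m ≠ 0 := hm.ne'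
  have hn0 : n ≠ 0 := hn.ne'
  have hmg : m / g₁ ≠ 0 := (Nat.div_pos (Nat.le_of_dvd hm hg₁m) (Nat.pos_of_dvd_of_pos hg₁m hm)).ne'
  have hng : n / g₂ ≠ 0 := (Nat.div_pos (Nat.le_of_dvd hn hg₂n) (Nat.pos_of_dvd_of_pos hg₂n hn)).ne'
  -- evaluate factorizations at p
  have hfac := congrArg (fun f => f.factorization p) hk
  simp only [Nat.factorization_lcm hmg hng, Nat.factorization_lcm hm0 hn0,
    Finsupp.sup_apply, Nat.factorization_div hg₁m, Nat.factorization_div hg₂n,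
    Finsupp.tsub_apply] at hfac
  set α := m.factorization p
  set β := n.factorization p
  set a := g₁.factorization p with ha
  set b := g₂.factorization p with hb
  have ha1 : 1 ≤ a := hp.factorization_pos_of_dvd hg₁0 hpd
  have haα : a ≤ α := (Nat.factorization_le_iff_dvd hg₁0 hm0).2 hg₁m p
  have hbβ : b ≤ β := (Nat.factorization_le_iff_dvd hg₂0 hn0).2 hg₂n p
  have hβb : 1 ≤ β → 1 ≤ b := by
    intro hβ
    have hpn : p ∣ n := (Nat.Prime.dvd_iff_one_le_factorization hp hn0).2 hβ
    have hpm : p ∣ m := hpd.trans hg₁m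
    have hpd' : p ∣ Nat.gcd m n := Nat.dvd_gcd hpm hpn
    have hps₁ : p ∣ s₁ := hpd.trans (Nat.gcd_dvd_right _ _)
    have hps₂ : p ∣ s₂ := by
      have : s₂ = Nat.gcd m n - s₁ := by omega
      rw [this]; exact Nat.dvd_sub hpd' hps₁
    have : p ∣ g₂ := Nat.dvd_gcd hpn hps₂
    exact hp.factorization_pos_of_dvd hg₂0 this
  have hα1 : 1 ≤ α := le_trans ha1 haα
  omega


/-- **Trotter–Erdős-type necessity.**  Let `m, n ≥ 2` and let `H` be any
directed Hamiltonian cycle of the Cartesian product of the directed cycles on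
`m` and `n` vertices.  Then there are positive integers `s₁, s₂` with
`s₁ + s₂ = gcd(m, n)`, `gcd(m, s₁) = 1` and `gcd(n, s₂) = 1` such that every
`gcd(m, n)` consecutive arcs of `H` contain exactly `s₁` arcs in the first
dimension and exactly `s₂` arcs in the second dimension. -/
theorem dirHamCycle_gcd_split
    (m n : ℕ) (hm : 2 ≤ m) (hn : 2 ≤ n)
    (H : ZMod (m * n) → ZMod m × ZMod n)
    (hH : IsDirHamCycle2 H) :
    ∃ s₁ s₂ : ℕ, 0 < s₁ ∧ 0 < s₂ ∧ s₁ + s₂ = Nat.gcd m n ∧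
      Nat.gcd m s₁ = 1 ∧ Nat.gcd n s₂ = 1 ∧
      WindowCounts H (Nat.gcd m n) s₁ s₂ := by
  haveI : NeZero (m * n) := ⟨by positivity⟩
  have hd : 0 < Nat.gcd m n := Nat.gcd_pos_of_pos_left n (by omega)
  set d := Nat.gcd m n with hdd
  set s₁ := ((Finset.range d).filter
      (fun a => ArcInDim1 H ((a : ℕ) : ZMod (m * n)))).card with hs₁
  have hs₁d : s₁ ≤ d := le_trans (Finset.card_filter_le _ _) (le_of_eq (Finset.card_range d))
  set s₂ := d - s₁ with hs₂
  have hsum : s₁ + s₂ = d := by omega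
  have hwin1 : ∀ t, ((Finset.range d).filter (fun a => ArcInDim1 H (t + (a : ℕ)))).card = s₁ :=
    fun t => window_const H hm hn hH t
  have hwin2 : ∀ t, ((Finset.range d).filter (fun a => ArcInDim2 H (t + (a : ℕ)))).card = s₂ := by
    intro t
    rw [window2_card H hm hn hH t, hwin1 t]
  -- positivity
  have h1pos : 0 < s₁ := by
    obtain ⟨t, ht⟩ := exists_dim1 H hm hn hH
    rw [← hwin1 t]
    apply Finset.card_pos.2
    refine ⟨0, Finset.mem_filter.2 ⟨Finset.mem_range.2 hd, ?_⟩⟩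
    simpa using ht
  have h2pos : 0 < s₂ := by
    obtain ⟨t, ht⟩ := exists_dim2 H hm hn hH
    rw [← hwin2 t]
    apply Finset.card_pos.2
    refine ⟨0, Finset.mem_filter.2 ⟨Finset.mem_range.2 hd, ?_⟩⟩
    simpa using ht
  -- the key divisibility
  set g₁ := Nat.gcd m s₁ with hg₁
  set g₂ := Nat.gcd n s₂ with hg₂
  set k := Nat.lcm (m / g₁) (n / g₂) with hk
  have hmks : m ∣ k * s₁ := by
    obtain ⟨e, he⟩ := Nat.dvd_lcm_left (m / g₁) (n / g₂)
    obtain ⟨c, hc⟩ := Nat.gcd_dvd_right m s₁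
    have : k * s₁ = m * (e * c) := by
      rw [← hk] at he
      calc k * s₁ = (m / g₁ * g₁) * (e * c) := by rw [he, hc]; ring
        _ = m * (e * c) := by rw [Nat.div_mul_cancel (Nat.gcd_dvd_left m s₁)]
    exact ⟨e * c, this⟩
  have hnks : n ∣ k * s₂ := by
    obtain ⟨e, he⟩ := Nat.dvd_lcm_right (m / g₁) (n / g₂)
    obtain ⟨c, hc⟩ := Nat.gcd_dvd_right n s₂
    have : k * s₂ = n * (e * c) := by
      rw [← hk] at he
      calc k * s₂ = (n / g₂ * g₂) * (e * c) := by rw [he, hc]; ring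
        _ = n * (e * c) := by rw [Nat.div_mul_cancel (Nat.gcd_dvd_left n s₂)]
    exact ⟨e * c, this⟩
  have htraj := traj H hm hn hH (k * d)
  have hc1 : ((Finset.range (k * d)).filter
      (fun a => ArcInDim1 H ((a : ℕ) : ZMod (m * n)))).card = k * s₁ := by
    rw [c1_mul H hm hn hH k]
  have hsub : k * d - k * s₁ = k * s₂ := by
    have : k * d = k * s₁ + k * s₂ := by rw [← hsum]; ring
    omega
  have hH1 : H (((k * d : ℕ)) : ZMod (m * n)) = H (((0 : ℕ)) : ZMod (m * n)) := by
    apply Prod.ext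
    · rw [htraj.1, hc1]
      have : ((k * s₁ : ℕ) : ZMod m) = 0 := (ZMod.natCast_eq_zero_iff _ _).2 hmks
      simp [this]
    · rw [htraj.2, hc1, hsub]
      have : ((k * s₂ : ℕ) : ZMod n) = 0 := (ZMod.natCast_eq_zero_iff _ _).2 hnks
      simp [this]
  have hdvd : (m * n) ∣ k * d := by
    have h0 : ((k * d : ℕ) : ZMod (m * n)) = 0 := by
      have := hH.1.1 hH1
      simpa using this
    exact (ZMod.natCast_eq_zero_iff _ _).1 h0
  have hlk : Nat.lcm m n ∣ k := by
    rw [← Nat.gcd_mul_lcm m n] at hdvd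
    have : d * Nat.lcm m n ∣ d * k := by
      rw [← hdd] at hdvd
      rwa [mul_comm k d] at hdvd
    exact (Nat.mul_dvd_mul_iff_left hd).1 this
  have hkl : k ∣ Nat.lcm m n :=
    Nat.lcm_dvd ((Nat.div_dvd_of_dvd (Nat.gcd_dvd_left m s₁)).trans (Nat.dvd_lcm_left m n))
      ((Nat.div_dvd_of_dvd (Nat.gcd_dvd_left n s₂)).trans (Nat.dvd_lcm_right m n))
  have hkeq : Nat.lcm (m / g₁) (n / g₂) = Nat.lcm m n := Nat.dvd_antisymm hkl hlk
  have hcop1 : g₁ = 1 := aux_cop m n s₁ s₂ (by omega) (by omega) hsum hkeq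
  have hcop2 : g₂ = 1 := by
    apply aux_cop n m s₂ s₁ (by omega) (by omega)
    · rw [Nat.gcd_comm]; omega
    · rw [Nat.lcm_comm, Nat.lcm_comm n m]; exact hkeq
  exact ⟨s₁, s₂, h1pos, h2pos, hsum, hcop1, hcop2, fun t => ⟨hwin1 t, hwin2 t⟩⟩
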